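/- Let f : Z → ℝ ∪ {+∞} be a proper convex function, and for i = 1,…,k let r_i ∈ ∂f(z̃_i). Define z̃ᵃ = (1/k)∑ z̃_i, rᵃ = (1/k)∑ r_i and εᵃ = (1/k)∑⟨r_i, z̃_i − z̃ᵃ⟩. Then rᵃ ∈ ∂_{εᵃ} f(z̃ᵃ), i.e., f(z') ≥ f(z̃ᵃ) + ⟨rᵃ, z' − z̃ᵃ⟩ − εᵃ for all z' ∈ Z. -/

import Mathlib

open RealInnerProductSpace

lemma jensen_aux {Z : Type*} [NormedAddCommGroup Z] [InnerProductSpace ℝ Z]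
    (f : Z → EReal)
    (hconvex : ∀ x y : Z, ∀ a b : ℝ, 0 ≤ a → 0 ≤ b → a + b = 1 →
      f (a • x + b • y) ≤ (a : EReal) * f x + (b : EReal) * f y) :
    ∀ k : ℕ, 0 < k → ∀ (x : Fin k → Z) (a : Fin k → ℝ),
      (∀ i, f (x i) ≤ ((a i : ℝ) : EReal)) →
      f ((k : ℝ)⁻¹ • ∑ i, x i) ≤ (((k : ℝ)⁻¹ * ∑ i, a i : ℝ) : EReal) := by
  intro k
  induction k with
  | zero => intro h; exact absurd h (lt_irrefl 0)
  | succ k ih =>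
    intro _ x a ha
    rcases Nat.eq_zero_or_pos k with hk0 | hkpos
    · subst hk0
      norm_num [Fin.sum_univ_succ]
      exact ha 0
    · have hkR : (0:ℝ) < k := by exact_mod_cast hkpos
      have hk1R : (0:ℝ) < (k:ℝ) + 1 := by linarith
      set c : ℝ := (k : ℝ) / ((k:ℝ) + 1) with hc
      set b : ℝ := 1 / ((k:ℝ) + 1) with hb
      have hcb : c + b = 1 := by rw [hc, hb]; field_simp
      have hc0 : 0 ≤ c := by positivity
      have hb0 : 0 ≤ b := by positivity
      have hsum : (∑ i, x i) = (∑ i : Fin k, x i.castSucc) + x (Fin.last k) :=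
        Fin.sum_univ_castSucc x
      have hsuma : (∑ i, a i) = (∑ i : Fin k, a i.castSucc) + a (Fin.last k) :=
        Fin.sum_univ_castSucc a
      have hpt : ((k:ℝ)+1)⁻¹ • (∑ i, x i) =
          c • ((k:ℝ)⁻¹ • ∑ i : Fin k, x i.castSucc) + b • x (Fin.last k) := by
        rw [hsum, smul_add, smul_smul]
        congr 2
        · rw [hc]; field_simp
        · rw [hb]; field_simp
      have hcast : ((k+1 : ℕ) : ℝ) = (k:ℝ) + 1 := by push_cast; ring
      have hprev := ih hkpos (fun i => x i.castSucc) (fun i => a i.castSucc)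
        (fun i => ha i.castSucc)
      calc f (((k+1:ℕ):ℝ)⁻¹ • ∑ i, x i)
          = f (c • ((k:ℝ)⁻¹ • ∑ i : Fin k, x i.castSucc) + b • x (Fin.last k)) := by
            rw [hcast, hpt]
        _ ≤ (c : EReal) * f ((k:ℝ)⁻¹ • ∑ i : Fin k, x i.castSucc)
              + (b : EReal) * f (x (Fin.last k)) :=
            hconvex _ _ c b hc0 hb0 hcb
        _ ≤ (c : EReal) * (((k:ℝ)⁻¹ * ∑ i : Fin k, a i.castSucc : ℝ) : EReal)
              + (b : EReal) * ((a (Fin.last k) : ℝ) : EReal) :=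
            add_le_add (mul_le_mul_of_nonneg_left hprev (EReal.coe_nonneg.2 hc0))
              (mul_le_mul_of_nonneg_left (ha _) (EReal.coe_nonneg.2 hb0))
        _ = (((c * ((k:ℝ)⁻¹ * ∑ i : Fin k, a i.castSucc) + b * a (Fin.last k)) : ℝ) : EReal) := by
            push_cast; ring_nf
        _ = ((((k+1:ℕ):ℝ)⁻¹ * ∑ i, a i : ℝ) : EReal) := by
            congr 1
            rw [hsuma, hcast, hc, hb]
            field_simp

theorem stmt8 {Z : Type*} [NormedAddCommGroup Z] [InnerProductSpace ℝ Z]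
    [FiniteDimensional ℝ Z] (f : Z → EReal)
    (hproper_top : ∃ x, f x ≠ ⊤) (hproper_bot : ∀ x, f x ≠ ⊥)
    (hconvex : ∀ x y : Z, ∀ a b : ℝ, 0 ≤ a → 0 ≤ b → a + b = 1 →
      f (a • x + b • y) ≤ (a : EReal) * f x + (b : EReal) * f y)
    (k : ℕ) (hk : 0 < k) (ztil r : Fin k → Z)
    (hri : ∀ i, ∀ z' : Z, f (ztil i) + ((⟪r i, z' - ztil i⟫ : ℝ) : EReal) ≤ f z') :
    ∀ z' : Z,
      f ((k : ℝ)⁻¹ • ∑ j, ztil j) +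
        ((⟪(k : ℝ)⁻¹ • ∑ i, r i, z' - (k : ℝ)⁻¹ • ∑ j, ztil j⟫ -
          (k : ℝ)⁻¹ * ∑ i, ⟪r i, ztil i - (k : ℝ)⁻¹ • ∑ j, ztil j⟫ : ℝ) : EReal) ≤
        f z' := by
  intro z'
  by_cases htop : f z' = ⊤
  · rw [htop]; exact le_top
  obtain ⟨z₀, hz₀⟩ := hproper_top
  have hfin : ∀ i, f (ztil i) ≠ ⊤ := by
    intro i hti
    apply hz₀
    have h := hri i z₀
    rw [hti, EReal.top_add_coe] at h
    exact top_le_iff.1 h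
  set a : Fin k → ℝ := fun i => (f (ztil i)).toReal with ha_def
  have hfa : ∀ i, f (ztil i) = ((a i : ℝ) : EReal) :=
    fun i => (EReal.coe_toReal (hfin i) (hproper_bot _)).symm
  set b : ℝ := (f z').toReal with hb_def
  have hfb : f z' = ((b : ℝ) : EReal) := (EReal.coe_toReal htop (hproper_bot _)).symm
  have hJ := jensen_aux f hconvex k hk ztil a (fun i => (hfa i).le)
  have hR : ∀ i, a i + ⟪r i, z' - ztil i⟫ ≤ b := by
    intro i
    have h := hri i z'
    rw [hfa i, hfb, ← EReal.coe_add] at h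
    exact_mod_cast h
  set zA : Z := (k : ℝ)⁻¹ • ∑ j, ztil j with hzA
  have hkR : (0:ℝ) < k := Nat.cast_pos.2 hk
  have h1 : ⟪(k:ℝ)⁻¹ • ∑ i, r i, z' - zA⟫ = (k:ℝ)⁻¹ * ∑ i, ⟪r i, z' - zA⟫ := by
    rw [real_inner_smul_left, sum_inner]
  have h2 : (∑ i, ⟪r i, z' - zA⟫) - ∑ i, ⟪r i, ztil i - zA⟫
      = ∑ i, ⟪r i, z' - ztil i⟫ := by
    rw [← Finset.sum_sub_distrib]
    refine Finset.sum_congr rfl (fun i _ => ?_)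
    rw [inner_sub_right, inner_sub_right, inner_sub_right]
    ring
  have h3 : ∑ i, (a i + ⟪r i, z' - ztil i⟫) ≤ (k:ℝ) * b := by
    calc ∑ i, (a i + ⟪r i, z' - ztil i⟫) ≤ ∑ _i : Fin k, b :=
          Finset.sum_le_sum (fun i _ => hR i)
      _ = (k:ℝ) * b := by
          rw [Finset.sum_const, Finset.card_univ, Fintype.card_fin, nsmul_eq_mul]
  have key : ((k:ℝ)⁻¹ * ∑ i, a i) +
      (⟪(k:ℝ)⁻¹ • ∑ i, r i, z' - zA⟫ - (k:ℝ)⁻¹ * ∑ i, ⟪r i, ztil i - zA⟫) ≤ b := by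
    rw [h1]
    have heq : (k:ℝ)⁻¹ * (∑ i, a i) +
        ((k:ℝ)⁻¹ * (∑ i, ⟪r i, z' - zA⟫) - (k:ℝ)⁻¹ * ∑ i, ⟪r i, ztil i - zA⟫)
        = (k:ℝ)⁻¹ * ∑ i, (a i + ⟪r i, z' - ztil i⟫) := by
      rw [Finset.sum_add_distrib, ← h2]; ring
    rw [heq]
    calc (k:ℝ)⁻¹ * ∑ i, (a i + ⟪r i, z' - ztil i⟫) ≤ (k:ℝ)⁻¹ * ((k:ℝ) * b) :=
          mul_le_mul_of_nonneg_left h3 (inv_nonneg.2 hkR.le)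
      _ = b := by field_simp
  calc f zA + ((⟪(k:ℝ)⁻¹ • ∑ i, r i, z' - zA⟫
        - (k:ℝ)⁻¹ * ∑ i, ⟪r i, ztil i - zA⟫ : ℝ) : EReal)
      ≤ (((k:ℝ)⁻¹ * ∑ i, a i : ℝ) : EReal) + ((⟪(k:ℝ)⁻¹ • ∑ i, r i, z' - zA⟫
        - (k:ℝ)⁻¹ * ∑ i, ⟪r i, ztil i - zA⟫ : ℝ) : EReal) := add_le_add_left hJ _
    _ = ((((k:ℝ)⁻¹ * ∑ i, a i) + (⟪(k:ℝ)⁻¹ • ∑ i, r i, z' - zA⟫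
        - (k:ℝ)⁻¹ * ∑ i, ⟪r i, ztil i - zA⟫) : ℝ) : EReal) := by rw [EReal.coe_add]
    _ ≤ ((b : ℝ) : EReal) := EReal.coe_le_coe_iff.2 key
    _ = f z' := hfb.symm
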